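/- Let f : [a,b] → ℝ be continuous on [a,b] with a > 0 and differentiable on (a,b). Let p ∈ ℝ \ {0} and assume K_p(f′) := sup over u ∈ (a,b) of u^{1−p}·|f′(u)| is finite. Then for any x ∈ (a,b), |f(x) − (1/(b−a))·∫ₐᵇ f(t) dt| ≤ (K_p(f′)/(|p|(b−a))) · E_p(x), where E_p(x) = 2xᵖ(x − A) + (b−x)·L_pᵖ(b,x) − (x−a)·L_pᵖ(x,a) if p ∈ (0,∞); E_p(x) = (x−a)·L_pᵖ(x,a) − (b−x)·L_pᵖ(b,x) − 2xᵖ(x − A) if p ∈ (−∞,−1) ∪ (−1,0); and E_{−1}(x) = (x−a)·L^{−1}(x,a) − (b−x)·L^{−1}(b,x) − (2/x)(x − A) if p = −1. -/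

import Mathlib

set_option maxHeartbeats 1000000

open Set MeasureTheory intervalIntegral

theorem ostrowski_type_Kp (a b p : ℝ) (f : ℝ → ℝ)
    (ha : 0 < a) (hab : a < b) (hp : p ≠ 0)
    (hf : ContinuousOn f (Set.Icc a b))
    (hd : DifferentiableOn ℝ f (Set.Ioo a b))
    (hbdd : BddAbove ((fun u => u ^ (1 - p) * |deriv f u|) '' Set.Ioo a b))
    (x : ℝ) (hx : x ∈ Set.Ioo a b) :
    (0 < p →
      |f x - (1 / (b - a)) * ∫ t in a..b, f t| ≤
        sSup ((fun u => u ^ (1 - p) * |deriv f u|) '' Set.Ioo a b) / (|p| * (b - a)) *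
          (2 * x ^ p * (x - (a + b) / 2) +
            (b - x) * ((b ^ (p + 1) - x ^ (p + 1)) / ((p + 1) * (b - x))) -
            (x - a) * ((x ^ (p + 1) - a ^ (p + 1)) / ((p + 1) * (x - a))))) ∧
    (p < 0 → p ≠ -1 →
      |f x - (1 / (b - a)) * ∫ t in a..b, f t| ≤
        sSup ((fun u => u ^ (1 - p) * |deriv f u|) '' Set.Ioo a b) / (|p| * (b - a)) *
          ((x - a) * ((x ^ (p + 1) - a ^ (p + 1)) / ((p + 1) * (x - a))) -
            (b - x) * ((b ^ (p + 1) - x ^ (p + 1)) / ((p + 1) * (b - x))) -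
            2 * x ^ p * (x - (a + b) / 2))) ∧
    (p = -1 →
      |f x - (1 / (b - a)) * ∫ t in a..b, f t| ≤
        sSup ((fun u => u ^ (1 - p) * |deriv f u|) '' Set.Ioo a b) / (|p| * (b - a)) *
          ((x - a) * ((Real.log x - Real.log a) / (x - a)) -
            (b - x) * ((Real.log b - Real.log x) / (b - x)) -
            2 / x * (x - (a + b) / 2))) := by
  obtain ⟨hax, hxb⟩ := hx
  have hx0 : 0 < x := ha.trans hax
  have hb0 : 0 < b := ha.trans hab
  have hba : 0 < b - a := sub_pos.mpr hab
  set K := sSup ((fun u => u ^ (1 - p) * |deriv f u|) '' Set.Ioo a b) with hKdef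
  have hK0 : 0 ≤ K := by
    have h1 := le_csSup hbdd (Set.mem_image_of_mem _ (Set.mem_Ioo.mpr ⟨hax, hxb⟩))
    have h0 : (0:ℝ) ≤ x ^ (1-p) * |deriv f x| := by positivity
    exact h0.trans h1
  have hK : ∀ u ∈ Set.Ioo a b, |deriv f u| ≤ K * u ^ (p-1) := by
    intro u hu
    have hu0 : 0 < u := ha.trans hu.1
    have h1 := le_csSup hbdd (Set.mem_image_of_mem _ hu)
    have h3 : u ^ (p-1) * u ^ (1-p) = 1 := by
      rw [← Real.rpow_add hu0]; norm_num
    calc |deriv f u| = u ^ (p-1) * (u ^ (1-p) * |deriv f u|) := by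
          rw [← mul_assoc, h3, one_mul]
      _ ≤ u ^ (p-1) * K :=
          mul_le_mul_of_nonneg_left h1 (Real.rpow_pos_of_pos hu0 _).le
      _ = K * u ^ (p-1) := mul_comm _ _
  have hrpow_cont : ∀ s : Set ℝ, s ⊆ Set.Ici a → ContinuousOn (fun u : ℝ => u ^ p) s := by
    intro s hs u hu
    exact (Real.continuousAt_rpow_const u p
      (Or.inl (ne_of_gt (lt_of_lt_of_le ha (hs hu))))).continuousWithinAt
  have key : ∀ s ∈ Set.Icc a b, ∀ t ∈ Set.Icc a b, s ≤ t →
      |f t - f s| ≤ K / p * t ^ p - K / p * s ^ p := by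
    have mono : ∀ c : ℝ, |c| = 1 → MonotoneOn (fun u => K / p * u ^ p - c * f u) (Set.Icc a b) := by
      intro c hc
      apply monotoneOn_of_deriv_nonneg (convex_Icc a b)
      · exact ((hrpow_cont _ (fun u hu => hu.1)).const_smul (K/p)).sub
          (hf.const_smul c)
      · rw [interior_Icc]
        intro u hu
        have hu0 : 0 < u := ha.trans hu.1
        have h1 : DifferentiableAt ℝ (fun u : ℝ => u ^ p) u :=
          (Real.hasDerivAt_rpow_const (Or.inl hu0.ne')).differentiableAt
        exact (((h1.const_mul (K/p)).sub
          ((hd.differentiableAt (isOpen_Ioo.mem_nhds hu)).const_mul c)).differentiableWithinAt)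
      · rw [interior_Icc]
        intro u hu
        have hu0 : 0 < u := ha.trans hu.1
        have hfd : DifferentiableAt ℝ f u := hd.differentiableAt (isOpen_Ioo.mem_nhds hu)
        have h1 : HasDerivAt (fun u : ℝ => K/p * u ^ p - c * f u)
            (K/p * (p * u^(p-1)) - c * deriv f u) u :=
          ((Real.hasDerivAt_rpow_const (Or.inl hu0.ne')).const_mul (K/p)).sub
            (hfd.hasDerivAt.const_mul c)
        rw [h1.deriv]
        have h2 : K/p * (p * u^(p-1)) = K * u^(p-1) := by field_simp
        rw [h2]
        have h3 := hK u hu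
        have h4 : c * deriv f u ≤ |deriv f u| := by
          calc c * deriv f u ≤ |c * deriv f u| := le_abs_self _
            _ = |deriv f u| := by rw [abs_mul, hc, one_mul]
        linarith
    intro s hs t ht hst
    have h1 := mono 1 (by norm_num) hs ht hst
    have h2 := mono (-1) (by norm_num) hs ht hst
    simp only [one_mul, neg_one_mul] at h1 h2
    rw [abs_le]
    constructor <;> [linarith; linarith]
  have hfInt : ∀ u v : ℝ, u ∈ Set.Icc a b → v ∈ Set.Icc a b →
      IntervalIntegrable f volume u v := by
    intro u v hu hv
    apply ContinuousOn.intervalIntegrable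
    exact hf.mono (Set.uIcc_subset_Icc hu hv)
  have hψInt : ∀ u v : ℝ, u ∈ Set.Icc a b → v ∈ Set.Icc a b →
      IntervalIntegrable (fun t : ℝ => t ^ p) volume u v := by
    intro u v hu hv
    apply ContinuousOn.intervalIntegrable
    exact (hrpow_cont _ ((Set.uIcc_subset_Icc hu hv).trans
      (Set.Icc_subset_Ici_self))).mono (le_refl _)
  have haB : a ∈ Set.Icc a b := ⟨le_rfl, hab.le⟩
  have hbB : b ∈ Set.Icc a b := ⟨hab.le, le_rfl⟩
  have hxB : x ∈ Set.Icc a b := ⟨hax.le, hxb.le⟩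
  have hgInt : ∀ u v : ℝ, u ∈ Set.Icc a b → v ∈ Set.Icc a b →
      IntervalIntegrable (fun t => |f x - f t|) volume u v := by
    intro u v hu hv
    apply ContinuousOn.intervalIntegrable
    exact (continuousOn_const.sub (hf.mono (Set.uIcc_subset_Icc hu hv))).abs
  have e1 : f x - (1/(b-a)) * ∫ t in a..b, f t = (1/(b-a)) * ∫ t in a..b, (f x - f t) := by
    rw [intervalIntegral.integral_sub intervalIntegrable_const (hfInt a b haB hbB),
      intervalIntegral.integral_const]
    field_simp
    ring
  have e2 : |f x - (1/(b-a)) * ∫ t in a..b, f t| ≤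
      (1/(b-a)) * ∫ t in a..b, |f x - f t| := by
    rw [e1, abs_mul, abs_of_pos (by positivity : (0:ℝ) < 1/(b-a))]
    exact mul_le_mul_of_nonneg_left
      (intervalIntegral.abs_integral_le_integral_abs hab.le) (by positivity)
  have hsplit : (∫ t in a..b, |f x - f t|) =
      (∫ t in a..x, |f x - f t|) + ∫ t in x..b, |f x - f t| :=
    (intervalIntegral.integral_add_adjacent_intervals
      (hgInt a x haB hxB) (hgInt x b hxB hbB)).symm
  have hb1 : (∫ t in a..x, |f x - f t|) ≤ ∫ t in a..x, (K/p * x^p - K/p * t^p) := by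
    apply intervalIntegral.integral_mono_on hax.le (hgInt a x haB hxB)
    · exact (intervalIntegrable_const.sub ((hψInt a x haB hxB).const_mul (K/p)))
    · intro t ht
      exact key t ⟨ht.1, ht.2.trans hxb.le⟩ x hxB ht.2
  have hb2 : (∫ t in x..b, |f x - f t|) ≤ ∫ t in x..b, (K/p * t^p - K/p * x^p) := by
    apply intervalIntegral.integral_mono_on hxb.le (hgInt x b hxB hbB)
    · exact (((hψInt x b hxB hbB).const_mul (K/p)).sub intervalIntegrable_const)
    · intro t ht
      rw [abs_sub_comm]
      exact key x hxB t ⟨hax.le.trans ht.1, ht.2⟩ ht.1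
  have c1 : (∫ t in a..x, (K/p * x^p - K/p * t^p)) =
      (x-a) * (K/p * x^p) - K/p * ∫ t in a..x, t^p := by
    rw [intervalIntegral.integral_sub intervalIntegrable_const
      ((hψInt a x haB hxB).const_mul (K/p)), intervalIntegral.integral_const,
      intervalIntegral.integral_const_mul]
    simp [smul_eq_mul]
  have c2 : (∫ t in x..b, (K/p * t^p - K/p * x^p)) =
      K/p * (∫ t in x..b, t^p) - (b-x) * (K/p * x^p) := by
    rw [intervalIntegral.integral_sub ((hψInt x b hxB hbB).const_mul (K/p))
      intervalIntegrable_const, intervalIntegral.integral_const,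
      intervalIntegral.integral_const_mul]
    simp [smul_eq_mul]
  have main : |f x - (1/(b-a)) * ∫ t in a..b, f t| ≤
      (1/(b-a)) * (((x-a) * (K/p * x^p) - K/p * ∫ t in a..x, t^p) +
        (K/p * (∫ t in x..b, t^p) - (b-x) * (K/p * x^p))) := by
    rw [← c1, ← c2]
    refine e2.trans (mul_le_mul_of_nonneg_left ?_ (by positivity))
    rw [hsplit]
    exact add_le_add hb1 hb2
  clear_value K
  refine ⟨?_, ?_, ?_⟩
  · intro hpos
    have hI1 : (∫ t in a..x, (t:ℝ)^p) = (x^(p+1) - a^(p+1))/(p+1) :=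
      integral_rpow (Or.inl (by linarith))
    have hI2 : (∫ t in x..b, (t:ℝ)^p) = (b^(p+1) - x^(p+1))/(p+1) :=
      integral_rpow (Or.inl (by linarith))
    rw [hI1, hI2] at main
    refine main.trans (le_of_eq ?_)
    rw [abs_of_pos hpos]
    have hp1 : p + 1 ≠ 0 := by linarith
    have hbx : b - x ≠ 0 := by linarith
    have hxa : x - a ≠ 0 := by linarith
    field_simp
    ring
  · intro hneg hne1
    have h0ax : (0:ℝ) ∉ Set.uIcc a x := by
      rw [Set.uIcc_of_le hax.le]; exact fun h => absurd h.1 (by linarith)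
    have h0xb : (0:ℝ) ∉ Set.uIcc x b := by
      rw [Set.uIcc_of_le hxb.le]; exact fun h => absurd h.1 (by linarith)
    have hI1 : (∫ t in a..x, (t:ℝ)^p) = (x^(p+1) - a^(p+1))/(p+1) :=
      integral_rpow (Or.inr ⟨hne1, h0ax⟩)
    have hI2 : (∫ t in x..b, (t:ℝ)^p) = (b^(p+1) - x^(p+1))/(p+1) :=
      integral_rpow (Or.inr ⟨hne1, h0xb⟩)
    rw [hI1, hI2] at main
    refine main.trans (le_of_eq ?_)
    rw [abs_of_neg hneg]
    have hp1 : p + 1 ≠ 0 := fun h => hne1 (by linarith)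
    have hbx : b - x ≠ 0 := by linarith
    have hxa : x - a ≠ 0 := by linarith
    field_simp
    ring
  · intro hm1
    subst hm1
    have hI1 : (∫ t in a..x, (t:ℝ)^(-1:ℝ)) = Real.log x - Real.log a := by
      simp only [Real.rpow_neg_one]
      rw [integral_inv_of_pos ha hx0, Real.log_div hx0.ne' ha.ne']
    have hI2 : (∫ t in x..b, (t:ℝ)^(-1:ℝ)) = Real.log b - Real.log x := by
      simp only [Real.rpow_neg_one]
      rw [integral_inv_of_pos hx0 hb0, Real.log_div hb0.ne' hx0.ne']
    rw [hI1, hI2] at main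
    simp only [Real.rpow_neg_one] at main
    refine main.trans (le_of_eq ?_)
    have habs : |(-1:ℝ)| = 1 := by norm_num
    rw [habs]
    have hbx : b - x ≠ 0 := sub_ne_zero.mpr (ne_of_gt hxb)
    have hxa : x - a ≠ 0 := sub_ne_zero.mpr (ne_of_gt hax)
    field_simp
    ring
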